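/- Let A be a symmetric d×d matrix with A ≺ uI, let δ_U > 0, and let v ∈ R^d. Define Φ^u(A) = tr[(uI − A)⁻¹]. If c ≥ vᵀ( ((u+δ_U)I − A)⁻² / (Φ^u(A) − Φ^{u+δ_U}(A)) + ((u+δ_U)I − A)⁻¹ )v and c > 0, then Φ^{u+δ_U}(A + (1/c)·vvᵀ) ≤ Φ^u(A) and A + (1/c)·vvᵀ ≺ (u+δ_U)I. -/

import Mathlib

open Matrix

namespace BSS

variable {d : ℕ}

lemma herm_of_symm {M : Matrix (Fin d) (Fin d) ℝ} (h : Mᵀ = M) : M.IsHermitian := by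
  unfold Matrix.IsHermitian
  rw [conjTranspose_eq_transpose_of_trivial, h]

lemma symm_of_herm {M : Matrix (Fin d) (Fin d) ℝ} (h : M.IsHermitian) : Mᵀ = M := by
  have := h.eq
  rwa [conjTranspose_eq_transpose_of_trivial] at this

lemma dot_mulVec_symm {N : Matrix (Fin d) (Fin d) ℝ} (h : Nᵀ = N) (a b : Fin d → ℝ) :
    a ⬝ᵥ N *ᵥ b = (N *ᵥ a) ⬝ᵥ b := by
  rw [dotProduct_mulVec]
  conv_lhs => rw [← h]
  rw [vecMul_transpose]

lemma trace_vecMulVec (a b : Fin d → ℝ) : (vecMulVec a b).trace = a ⬝ᵥ b := by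
  simp [Matrix.trace, vecMulVec_apply, dotProduct, Matrix.diag]

lemma vecMulVec_mul (a b : Fin d → ℝ) (N : Matrix (Fin d) (Fin d) ℝ) :
    vecMulVec a b * N = vecMulVec a (b ᵥ* N) := by
  ext i j
  simp [mul_apply, vecMulVec_apply, vecMul, dotProduct, Finset.mul_sum, mul_assoc]

lemma mul_vecMulVec (N : Matrix (Fin d) (Fin d) ℝ) (a b : Fin d → ℝ) :
    N * vecMulVec a b = vecMulVec (N *ᵥ a) b := by
  ext i j
  simp only [mul_apply, vecMulVec_apply, mulVec, dotProduct, Finset.sum_mul]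
  exact Finset.sum_congr rfl fun k _ => by ring

lemma vecMulVec_mul_vecMulVec (a b c e : Fin d → ℝ) :
    vecMulVec a b * vecMulVec c e = (b ⬝ᵥ c) • vecMulVec a e := by
  ext i j
  simp only [mul_apply, vecMulVec_apply, Matrix.smul_apply, dotProduct, Finset.sum_mul, smul_eq_mul]
  exact Finset.sum_congr rfl fun k _ => by ring

lemma posDef_smul_one {t : ℝ} (ht : 0 < t) : (t • (1 : Matrix (Fin d) (Fin d) ℝ)).PosDef := by
  have h1 : t • (1 : Matrix (Fin d) (Fin d) ℝ) = Matrix.diagonal (fun _ => t) := by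
    ext i j
    by_cases h : i = j <;> simp [Matrix.one_apply, Matrix.diagonal_apply, h]
  rw [h1]
  exact Matrix.PosDef.diagonal (fun _ => ht)

lemma posDef_smul {t : ℝ} (ht : 0 < t) {M : Matrix (Fin d) (Fin d) ℝ} (hM : M.PosDef) :
    (t • M).PosDef := by
  refine Matrix.PosDef.of_dotProduct_mulVec_pos ?_ (fun x hx => ?_)
  · exact herm_of_symm (by rw [transpose_smul, symm_of_herm hM.1])
  · have := hM.dotProduct_mulVec_pos hx
    simp only [smul_mulVec, dotProduct_smul, smul_eq_mul] at *
    exact mul_pos ht this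

lemma posDef_mul_self {M : Matrix (Fin d) (Fin d) ℝ} (hM : M.PosDef) : (M * M).PosDef := by
  have hs := symm_of_herm hM.1
  haveI := hM.isUnit.invertible
  refine Matrix.PosDef.of_dotProduct_mulVec_pos (herm_of_symm (by rw [transpose_mul, hs])) (fun x hx => ?_)
  have hMx : M *ᵥ x ≠ 0 := by
    intro h
    apply hx
    have := congrArg (fun y => M⁻¹ *ᵥ y) h
    simpa [mulVec_mulVec, Matrix.inv_mul_of_invertible] using this
  have : star x ⬝ᵥ (M * M) *ᵥ x = (M *ᵥ x) ⬝ᵥ (M *ᵥ x) := by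
    rw [star_trivial, ← mulVec_mulVec, dot_mulVec_symm hs]
  rw [this]
  obtain ⟨i, hi⟩ := Function.ne_iff.mp hMx
  refine Finset.sum_pos' (fun j _ => mul_self_nonneg _) ⟨i, Finset.mem_univ i, ?_⟩
  have hi' : (M *ᵥ x) i ≠ 0 := by simpa using hi
  exact mul_self_pos.mpr hi'

lemma trace_pos_of_posDef [Nonempty (Fin d)] {M : Matrix (Fin d) (Fin d) ℝ}
    (hM : M.PosDef) : 0 < M.trace := by
  have hdiag : ∀ i, 0 < M i i := fun i => by
    have h := hM.dotProduct_mulVec_pos (x := Pi.single i 1) (by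
      intro h
      have := congrFun h i
      simp at this)
    simpa [dotProduct, Pi.single_apply, Finset.sum_ite_eq, mulVec, ite_mul] using h
  exact Finset.sum_pos (fun i _ => hdiag i) Finset.univ_nonempty

end BSS

open Matrix in
theorem bss_upper_barrier (d : ℕ) (A : Matrix (Fin d) (Fin d) ℝ) (hA : A.IsSymm)
    (u δU : ℝ) (hδU : 0 < δU)
    (hAu : (u • (1 : Matrix (Fin d) (Fin d) ℝ) - A).PosDef)
    (v : Fin d → ℝ) (c : ℝ) (hc : 0 < c)
    (hcge :
      v ⬝ᵥ ((((u + δU) • (1 : Matrix (Fin d) (Fin d) ℝ) - A) ^ 2)⁻¹).mulVec v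
          / (((u • (1 : Matrix (Fin d) (Fin d) ℝ) - A)⁻¹).trace
              - (((u + δU) • (1 : Matrix (Fin d) (Fin d) ℝ) - A)⁻¹).trace)
        + v ⬝ᵥ (((u + δU) • (1 : Matrix (Fin d) (Fin d) ℝ) - A)⁻¹).mulVec v ≤ c) :
    (((u + δU) • (1 : Matrix (Fin d) (Fin d) ℝ) - (A + c⁻¹ • vecMulVec v v))⁻¹).trace
        ≤ ((u • (1 : Matrix (Fin d) (Fin d) ℝ) - A)⁻¹).trace
    ∧ ((u + δU) • (1 : Matrix (Fin d) (Fin d) ℝ) - (A + c⁻¹ • vecMulVec v v)).PosDef := by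
  classical
  simp only [sub_add_eq_sub_sub]
  set P : Matrix (Fin d) (Fin d) ℝ := u • 1 - A with hPdef
  set M : Matrix (Fin d) (Fin d) ℝ := (u + δU) • 1 - A with hMdef
  have hMP : M = P + δU • 1 := by rw [hPdef, hMdef, add_smul]; abel
  have hM : M.PosDef := by rw [hMP]; exact hAu.add (BSS.posDef_smul_one hδU)
  haveI := hAu.isUnit.invertible
  haveI := hM.isUnit.invertible
  have hPs : Pᵀ = P := BSS.symm_of_herm hAu.1
  have hMs : Mᵀ = M := BSS.symm_of_herm hM.1
  set N := M⁻¹ with hNdef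
  have hNpd : N.PosDef := hM.inv
  have hNs : Nᵀ = N := BSS.symm_of_herm hNpd.1
  have hMN : M * N = 1 := Matrix.mul_inv_of_invertible M
  have hM2 : (M ^ 2)⁻¹ = N * N := by
    apply Matrix.inv_eq_right_inv
    rw [pow_two, Matrix.mul_assoc, ← Matrix.mul_assoc M N N, hMN, Matrix.one_mul, hMN]
  rw [hM2] at hcge
  set q := v ⬝ᵥ N *ᵥ v with hqdef
  set p := v ⬝ᵥ (N * N) *ᵥ v with hpdef
  set Δ := P⁻¹.trace - N.trace with hΔdef
  clear_value P M N q p Δ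
  have hMPmul : (M * P).PosDef := by
    have h1 : M * P = P * P + δU • P := by rw [hMP, Matrix.add_mul, Matrix.smul_mul, Matrix.one_mul]
    rw [h1]
    exact (BSS.posDef_mul_self hAu).add (BSS.posDef_smul hδU hAu)
  have hΔeq : Δ = δU * ((M * P)⁻¹).trace := by
    have hMsubP : M - P = δU • (1 : Matrix (Fin d) (Fin d) ℝ) := by rw [hMP]; abel
    have h2 : P⁻¹ * (M - P) * N = P⁻¹ - N := by
      rw [Matrix.mul_sub, Matrix.sub_mul, Matrix.mul_assoc, hMN, Matrix.mul_one,
        Matrix.inv_mul_of_invertible, Matrix.one_mul]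
    have h3 : P⁻¹ - N = δU • (P⁻¹ * N) := by
      rw [← h2, hMsubP, Matrix.mul_smul, Matrix.mul_one, Matrix.smul_mul]
    rw [hΔdef, ← Matrix.trace_sub, h3, Matrix.trace_smul, smul_eq_mul, Matrix.mul_inv_rev, hNdef]
  by_cases hv : v = 0
  · have hV0 : vecMulVec v v = 0 := by ext i j; simp [vecMulVec_apply, hv]
    rw [hV0, smul_zero, sub_zero]
    have htr : (0:ℝ) ≤ ((M * P)⁻¹).trace := by
      rcases isEmpty_or_nonempty (Fin d) with h | h
      · simp [Matrix.trace]
      · exact (BSS.trace_pos_of_posDef hMPmul.inv).le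
    have hΔ0 : 0 ≤ Δ := by rw [hΔeq]; exact mul_nonneg hδU.le htr
    exact ⟨by rw [← hNdef]; linarith [hΔ0], hM⟩
  · haveI : Nonempty (Fin d) := ⟨(Function.ne_iff.mp hv).choose⟩
    have hΔpos : 0 < Δ := by
      rw [hΔeq]; exact mul_pos hδU (BSS.trace_pos_of_posDef hMPmul.inv)
    have hppos : 0 < p := by
      rw [hpdef]
      have h := (BSS.posDef_mul_self hNpd).dotProduct_mulVec_pos hv
      rwa [star_trivial] at h
    have hqpos : 0 < q := by
      rw [hqdef]
      have h := hNpd.dotProduct_mulVec_pos hv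
      rwa [star_trivial] at h
    have hcq : q < c := by
      have : 0 < p / Δ := div_pos hppos hΔpos
      linarith
    have hcqpos : 0 < c - q := by linarith
    set V := vecMulVec v v with hVdef
    have hVs : Vᵀ = V := by ext i j; simp [hVdef, vecMulVec_apply, mul_comm]
    set w := N *ᵥ v with hwdef
    have hMw : M *ᵥ w = v := by rw [hwdef, mulVec_mulVec, hMN, one_mulVec]
    clear_value V w
    have hq_vw : q = v ⬝ᵥ w := by rw [hqdef]
    have hCS : ∀ x : Fin d → ℝ, (v ⬝ᵥ x)^2 ≤ q * (x ⬝ᵥ M *ᵥ x) := by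
      intro x
      have key : ∀ t : ℝ, 0 ≤ x ⬝ᵥ M *ᵥ x - 2*t*(v ⬝ᵥ x) + t^2 * q := by
        intro t
        have h0 := hM.posSemidef.dotProduct_mulVec_nonneg (x - t • w)
        rw [star_trivial] at h0
        have hexp : (x - t • w) ⬝ᵥ M *ᵥ (x - t • w)
            = x ⬝ᵥ M *ᵥ x - 2*t*(v ⬝ᵥ x) + t^2 * q := by
          rw [mulVec_sub, mulVec_smul, hMw, dotProduct_sub, sub_dotProduct, sub_dotProduct,
            dotProduct_smul, smul_dotProduct, smul_dotProduct, dotProduct_smul,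
            BSS.dot_mulVec_symm hMs w x, hMw, hq_vw]
          simp only [smul_eq_mul]
          rw [dotProduct_comm x v, dotProduct_comm w v]
          ring
        rw [hexp] at h0
        exact h0
      set e := v ⬝ᵥ x with hedef
      set S := x ⬝ᵥ M *ᵥ x with hSdef
      have hkey := key (e / q)
      have hident : q * (S - 2*(e/q)*e + (e/q)^2 * q) = q*S - e^2 := by
        field_simp
        ring
      have h7 : 0 ≤ q*S - e^2 := by
        rw [← hident]
        exact mul_nonneg hqpos.le hkey
      linarith
    have hBpd : (M - c⁻¹ • V).PosDef := by
      refine Matrix.PosDef.of_dotProduct_mulVec_pos (BSS.herm_of_symm ?_) (fun x hx => ?_)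
      · rw [transpose_sub, transpose_smul, hVs, hMs]
      · rw [star_trivial, Matrix.sub_mulVec, smul_mulVec, dotProduct_sub, dotProduct_smul,
          smul_eq_mul]
        have hVx : x ⬝ᵥ V *ᵥ x = (v ⬝ᵥ x)^2 := by
          have hVmv : V *ᵥ x = (v ⬝ᵥ x) • v := by
            ext i
            simp [hVdef, mulVec, vecMulVec_apply, dotProduct, Finset.mul_sum, mul_assoc,
              mul_comm, mul_left_comm]
          rw [hVmv, dotProduct_smul, smul_eq_mul, dotProduct_comm x v, pow_two]
        rw [hVx]
        have hSx : 0 < x ⬝ᵥ M *ᵥ x := by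
          have h := hM.dotProduct_mulVec_pos hx
          rwa [star_trivial] at h
        have h1 : c⁻¹ * (v ⬝ᵥ x)^2 ≤ c⁻¹ * (q * (x ⬝ᵥ M *ᵥ x)) :=
          mul_le_mul_of_nonneg_left (hCS x) (inv_nonneg.mpr hc.le)
        have h2 : c⁻¹ * (q * (x ⬝ᵥ M *ᵥ x)) < x ⬝ᵥ M *ᵥ x := by
          rw [inv_mul_eq_div, div_lt_iff₀ hc]
          nlinarith
        linarith
    -- Sherman–Morrison
    set s := (c - q)⁻¹ with hsdef
    clear_value s
    have hs : s * (c - q) = 1 := by rw [hsdef]; exact inv_mul_cancel₀ hcqpos.ne'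
    have hVNV : V * N * V = q • V := by
      rw [hVdef, BSS.vecMulVec_mul, BSS.vecMulVec_mul_vecMulVec]
      congr 1
      rw [← dotProduct_mulVec, hqdef, hwdef]
    have hMC1 : M * (N * V * N) = V * N := by
      rw [← Matrix.mul_assoc, ← Matrix.mul_assoc, hMN, Matrix.one_mul]
    have hVC : V * (N * V * N) = q • (V * N) := by
      have hassoc : V * (N * V * N) = (V * N * V) * N := by simp only [Matrix.mul_assoc]
      rw [hassoc, hVNV, Matrix.smul_mul]
    set C := N + s • (N * V * N) with hCdef
    clear_value C
    have hW : (M - c⁻¹ • V) * C = 1 + (s - c⁻¹ - c⁻¹ * (s * q)) • (V * N) := by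
      rw [hCdef, Matrix.sub_mul, Matrix.mul_add, Matrix.mul_add]
      simp only [Matrix.smul_mul, Matrix.mul_smul]
      rw [hMN, hMC1, hVC]
      module
    have hzero : s - c⁻¹ - c⁻¹ * (s * q) = 0 := by
      field_simp
      linear_combination hs
    have hBC : (M - c⁻¹ • V) * C = 1 := by
      rw [hW, hzero, zero_smul, add_zero]
    have hBinv : (M - c⁻¹ • V)⁻¹ = C := Matrix.inv_eq_right_inv hBC
    have htrC : C.trace = N.trace + s * p := by
      rw [hCdef, Matrix.trace_add, Matrix.trace_smul, smul_eq_mul]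
      congr 1
      have h1 : (N * V * N).trace = (V * (N * N)).trace := by
        rw [Matrix.mul_assoc, Matrix.trace_mul_comm, Matrix.mul_assoc]
      rw [h1, hVdef, BSS.vecMulVec_mul, BSS.trace_vecMulVec, dotProduct_comm,
        ← dotProduct_mulVec, ← hpdef]
    have hsp : s * p ≤ Δ := by
      have h1 : p / Δ ≤ c - q := by linarith
      have h2 : s * p = p / (c - q) := by rw [hsdef, div_eq_mul_inv, mul_comm]
      rw [h2, div_le_iff₀ hcqpos]
      have h3 := mul_le_mul_of_nonneg_left h1 hΔpos.le
      have h4 : Δ * (p / Δ) = p := by field_simp [hΔpos.ne']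
      linarith
    refine ⟨?_, hBpd⟩
    rw [hBinv, htrC]
    linarith
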